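/- Suppose every Gorenstein projective Γ-module (X, Y)_φ satisfies: X is Gorenstein projective over R, Coker φ is Gorenstein projective over S, and φ is mono; and conversely. Then Tor₁^R(M, P) = 0 for every Gorenstein projective R-module P. -/

import Mathlib

open TensorProduct CategoryTheory

universe u
variable (R S M : Type) [CommRing R] [CommRing S]
  [AddCommGroup M] [Module R M] [Module S M] [SMulCommClass R S M]

/-- Modules over the triangular matrix ring Γ = [[R,0],[M,S]]: triples (X,Y,φ). -/
structure TriMod where
  X : Type
  Y : Type
  [addX : AddCommGroup X]
  [modX : Module R X]
  [addY : AddCommGroup Y]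
  [modY : Module S Y]
  phi : (M ⊗[R] X) →ₗ[S] Y

attribute [instance] TriMod.addX TriMod.modX TriMod.addY TriMod.modY

variable {R S M}

lemma lT_aux {X X' : Type} [AddCommGroup X] [Module R X] [AddCommGroup X'] [Module R X']
    (f : X →ₗ[R] X') (s : S) (t : M ⊗[R] X) :
    LinearMap.lTensor M f (s • t) = s • LinearMap.lTensor M f t := by
  induction t using TensorProduct.induction_on with
  | zero => simp
  | tmul m x => simp [TensorProduct.smul_tmul']
  | add a b ha hb => simp only [smul_add, map_add, ha, hb]

/-- `M ⊗ f` as an `S`-linear map. -/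
noncomputable def lT {X X' : Type} [AddCommGroup X] [Module R X] [AddCommGroup X'] [Module R X']
    (f : X →ₗ[R] X') : (M ⊗[R] X) →ₗ[S] (M ⊗[R] X') where
  toFun := LinearMap.lTensor M f
  map_add' := map_add _
  map_smul' s t := lT_aux f s t

@[simp] lemma lT_id {X : Type} [AddCommGroup X] [Module R X] :
    (lT (LinearMap.id : X →ₗ[R] X) : (M ⊗[R] X) →ₗ[S] (M ⊗[R] X)) = LinearMap.id := by
  apply LinearMap.ext; intro t
  simp [lT]

lemma lT_comp {X X' X'' : Type} [AddCommGroup X] [Module R X] [AddCommGroup X'] [Module R X']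
    [AddCommGroup X''] [Module R X''] (f : X →ₗ[R] X') (g : X' →ₗ[R] X'') :
    (lT (g ∘ₗ f) : (M ⊗[R] X) →ₗ[S] _) = (lT g) ∘ₗ (lT f) := by
  apply LinearMap.ext; intro t
  simp [lT, LinearMap.lTensor_comp]

@[simp] lemma lT_zero {X X' : Type} [AddCommGroup X] [Module R X] [AddCommGroup X'] [Module R X'] :
    (lT (0 : X →ₗ[R] X') : (M ⊗[R] X) →ₗ[S] (M ⊗[R] X')) = 0 := by
  apply LinearMap.ext; intro t
  simp [lT]

variable (R S M) in
@[ext] structure TriModHom (A B : TriMod R S M) where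
  f : A.X →ₗ[R] B.X
  g : A.Y →ₗ[S] B.Y
  comm : g ∘ₗ A.phi = B.phi ∘ₗ lT f

instance : Category (TriMod R S M) where
  Hom A B := TriModHom R S M A B
  id A := ⟨LinearMap.id, LinearMap.id, by simp⟩
  comp {A B C} u v := ⟨v.f ∘ₗ u.f, v.g ∘ₗ u.g, by
    rw [LinearMap.comp_assoc, u.comm, ← LinearMap.comp_assoc, v.comm, lT_comp,
      LinearMap.comp_assoc]⟩
  id_comp u := by apply TriModHom.ext <;> simp
  comp_id u := by apply TriModHom.ext <;> simp
  assoc u v w := by apply TriModHom.ext <;> simp [LinearMap.comp_assoc]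

instance instZeroHom (A B : TriMod R S M) : Zero (A ⟶ B) := ⟨⟨0, 0, by simp⟩⟩

@[simp] lemma zero_f (A B : TriMod R S M) : (0 : A ⟶ B).f = 0 := rfl
@[simp] lemma zero_g (A B : TriMod R S M) : (0 : A ⟶ B).g = 0 := rfl
@[simp] lemma comp_f {A B C : TriMod R S M} (u : A ⟶ B) (v : B ⟶ C) :
    (u ≫ v).f = v.f ∘ₗ u.f := rfl
@[simp] lemma comp_g {A B C : TriMod R S M} (u : A ⟶ B) (v : B ⟶ C) :
    (u ≫ v).g = v.g ∘ₗ u.g := rfl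
@[simp] lemma id_f (A : TriMod R S M) : TriModHom.f (𝟙 A) = LinearMap.id := rfl
@[simp] lemma id_g (A : TriMod R S M) : TriModHom.g (𝟙 A) = LinearMap.id := rfl

instance : Limits.HasZeroMorphisms (TriMod R S M) where
  comp_zero u C := by apply TriModHom.ext <;> simp
  zero_comp A {B C} u := by apply TriModHom.ext <;> simp
section Generic
open CategoryTheory Limits
variable {C : Type u} [Category.{v} C] [Limits.HasZeroMorphisms C]

/-- A complex of projectives is totally acyclic if it is acyclic and stays acyclic
under `Hom(-, P)` for every projective `P`. -/
def IsTotallyAcyclic (E : ChainComplex C ℤ) : Prop :=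
  (∀ i, Projective (E.X i)) ∧ (∀ i, E.ExactAt i) ∧
  ∀ (P : C), Projective P → ∀ (i : ℤ) (g : E.X i ⟶ P), E.d (i + 1) i ≫ g = 0 →
    ∃ h : E.X (i - 1) ⟶ P, E.d i (i - 1) ≫ h = g

/-- A complex of injectives is totally acyclic if it is acyclic and stays acyclic
under `Hom(I, -)` for every injective `I`. -/
def IsInjTotallyAcyclic (E : ChainComplex C ℤ) : Prop :=
  (∀ i, Injective (E.X i)) ∧ (∀ i, E.ExactAt i) ∧
  ∀ (I : C), Injective I → ∀ (i : ℤ) (g : I ⟶ E.X i), g ≫ E.d i (i - 1) = 0 →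
    ∃ h : I ⟶ E.X (i + 1), h ≫ E.d (i + 1) i = g

/-- An object is Gorenstein projective if it is a syzygy (a kernel of a differential)
of a totally acyclic complex of projectives. -/
def IsGorensteinProjective (G : C) : Prop :=
  ∃ (E : ChainComplex C ℤ), IsTotallyAcyclic E ∧
    ∃ (ι : G ⟶ E.X 0) (w : ι ≫ E.d 0 (-1) = 0),
      Nonempty (IsLimit (KernelFork.ofι ι w))

/-- An object is Gorenstein injective if it is a cosyzygy (a cokernel of a differential)
of a totally acyclic complex of injectives. -/
def IsGorensteinInjective (G : C) : Prop :=
  ∃ (E : ChainComplex C ℤ), IsInjTotallyAcyclic E ∧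
    ∃ (π : E.X 0 ⟶ G) (w : E.d 1 0 ≫ π = 0),
      Nonempty (IsColimit (CokernelCofork.ofπ π w))

end Generic

/-- `Ext¹_A(P, N) = 0`, phrased as: every extension of `P` by `N` splits. -/
def Ext1Vanishes (A : Type) [Ring A] (P N : Type) [AddCommGroup P] [Module A P]
    [AddCommGroup N] [Module A N] : Prop :=
  ∀ (D : Type) [AddCommGroup D] [Module A D] (i : N →ₗ[A] D) (p : D →ₗ[A] P),
    Function.Injective i → Function.Surjective p → Function.Exact i p →
    ∃ s : P →ₗ[A] D, p ∘ₗ s = LinearMap.id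

/-- A module is Gorenstein projective. -/
def ModGorensteinProjective (A : Type) [Ring A] (N : Type) [AddCommGroup N] [Module A N] :
    Prop := IsGorensteinProjective (ModuleCat.of A N)

/-- A module is Gorenstein injective. -/
def ModGorensteinInjective (A : Type) [Ring A] (N : Type) [AddCommGroup N] [Module A N] :
    Prop := IsGorensteinInjective (ModuleCat.of A N)
section Constructions
open CategoryTheory Limits
variable {R S M : Type} [CommRing R] [CommRing S]
  [AddCommGroup M] [Module R M] [Module S M] [SMulCommClass R S M]

variable (R S M) in
/-- The Γ-module `e¹_λ(X) = (X, M ⊗ X)_1`. -/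
noncomputable def e1obj (X : Type) [AddCommGroup X] [Module R X] : TriMod R S M :=
  ⟨X, M ⊗[R] X, LinearMap.id⟩

variable (R S M) in
/-- The Γ-module `e²_λ(Y) = (0, Y)_0`. -/
noncomputable def e2obj (Y : Type) [AddCommGroup Y] [Module S Y] : TriMod R S M :=
  ⟨PUnit, Y, 0⟩

variable (S M) in
/-- The complex `M ⊗[R] E` of `S`-modules obtained from a complex `E` of `R`-modules. -/
noncomputable def tensorComplex (E : ChainComplex (ModuleCat R) ℤ) :
    ChainComplex (ModuleCat S) ℤ where
  X i := ModuleCat.of S (M ⊗[R] E.X i)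
  d i j := ModuleCat.ofHom (lT (E.d i j).hom)
  shape i j h := by
    have h0 : E.d i j = 0 := E.shape i j h
    apply ModuleCat.hom_ext
    rw [h0, ModuleCat.hom_ofHom, ModuleCat.hom_zero, lT_zero, ModuleCat.hom_zero]
  d_comp_d' i j k _ _ := by
    have h0 : ((E.d j k).hom ∘ₗ (E.d i j).hom) = 0 := by
      rw [← ModuleCat.hom_comp, E.d_comp_d i j k]; rfl
    apply ModuleCat.hom_ext
    rw [ModuleCat.hom_comp, ModuleCat.hom_ofHom, ModuleCat.hom_ofHom, ← lT_comp, h0, lT_zero,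
      ModuleCat.hom_zero]

variable (R S M) in
/-- Condition (1): `M ⊗[R] -` takes acyclic complexes of projective `R`-modules to
acyclic complexes of `S`-modules. -/
def Cond1 : Prop :=
  ∀ (E : ChainComplex (ModuleCat R) ℤ),
    (∀ i, Module.Projective R (E.X i)) → (∀ i, E.ExactAt i) →
    ∀ i, (tensorComplex S M E).ExactAt i

variable (S M) in
/-- `N` lies in `Add(M)`: it is a direct summand of a direct sum of copies of `M`. -/
def MemAdd (N : Type) [AddCommGroup N] [Module S N] : Prop :=
  ∃ (I : Type) (ι : N →ₗ[S] (I →₀ M)) (p : (I →₀ M) →ₗ[S] N), p ∘ₗ ι = LinearMap.id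

variable (R S M) in
/-- Condition (2): `Add(M) ⊆ GProj(S)ᗮ`. -/
def Cond2 : Prop :=
  ∀ (N : Type) [AddCommGroup N] [Module S N], MemAdd S M N →
    ∀ (G : Type) [AddCommGroup G] [Module S G],
      ModGorensteinProjective S G → Ext1Vanishes S G N

end Constructions
section MoreConstructions
open CategoryTheory Limits
variable {R S M : Type} [CommRing R] [CommRing S]
  [AddCommGroup M] [Module R M] [Module S M] [SMulCommClass R S M]

variable (R S M) in
/-- Termwise application of `e¹_λ` to a complex of `R`-modules. -/
noncomputable def e1c (E : ChainComplex (ModuleCat R) ℤ) : ChainComplex (TriMod R S M) ℤ where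
  X i := e1obj R S M (E.X i)
  d i j := ⟨(E.d i j).hom, lT (E.d i j).hom, by
    show lT (E.d i j).hom ∘ₗ LinearMap.id = LinearMap.id ∘ₗ _
    simp; rfl⟩
  shape i j h := by
    have h0 : (E.d i j).hom = 0 := by rw [E.shape i j h]; rfl
    apply TriModHom.ext <;> simp [h0] <;> rfl
  d_comp_d' i j k _ _ := by
    have h0 : ((E.d j k).hom ∘ₗ (E.d i j).hom) = 0 := by
      rw [← ModuleCat.hom_comp, E.d_comp_d i j k]; rfl
    apply TriModHom.ext <;> dsimp only [comp_f, comp_g]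
    · exact h0
    · show lT (E.d j k).hom ∘ₗ lT (E.d i j).hom = _
      rw [← lT_comp, h0, lT_zero]; rfl

variable (R S M) in
/-- Termwise application of `e²_λ` to a complex of `S`-modules. -/
noncomputable def e2c (E : ChainComplex (ModuleCat S) ℤ) : ChainComplex (TriMod R S M) ℤ where
  X i := e2obj R S M (E.X i)
  d i j := ⟨0, (E.d i j).hom, by
    show (E.d i j).hom ∘ₗ (0 : (M ⊗[R] PUnit) →ₗ[S] _) = _
    simp; rfl⟩
  shape i j h := by
    have h0 : (E.d i j).hom = 0 := by rw [E.shape i j h]; rfl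
    apply TriModHom.ext <;> simp [h0] <;> rfl
  d_comp_d' i j k _ _ := by
    have h0 : ((E.d j k).hom ∘ₗ (E.d i j).hom) = 0 := by
      rw [← ModuleCat.hom_comp, E.d_comp_d i j k]; rfl
    apply TriModHom.ext <;> dsimp only [comp_f, comp_g]
    · simp
    · exact h0

variable (R S M) in
/-- The complex of first components of a complex of Γ-modules. -/
noncomputable def compA (E : ChainComplex (TriMod R S M) ℤ) : ChainComplex (ModuleCat R) ℤ where
  X i := ModuleCat.of R (E.X i).X
  d i j := ModuleCat.ofHom (E.d i j).f
  shape i j h := by rw [E.shape i j h]; rfl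
  d_comp_d' i j k _ _ := by
    have h0 := congrArg TriModHom.f (E.d_comp_d i j k)
    simp only [comp_f, zero_f] at h0
    apply ModuleCat.hom_ext
    exact h0

lemma range_le_comap {A B : TriMod R S M} (u : A ⟶ B) :
    LinearMap.range A.phi ≤ (LinearMap.range B.phi).comap u.g := by
  rintro y ⟨t, rfl⟩
  exact ⟨lT u.f t, (LinearMap.congr_fun u.comm t).symm⟩

variable (R S M) in
/-- The complex `Coker E` of the cokernels of the structure maps of a complex of
Γ-modules. -/
noncomputable def cokerC (E : ChainComplex (TriMod R S M) ℤ) : ChainComplex (ModuleCat S) ℤ where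
  X i := ModuleCat.of S ((E.X i).Y ⧸ LinearMap.range (E.X i).phi)
  d i j := ModuleCat.ofHom (Submodule.mapQ _ _ (E.d i j).g (range_le_comap (E.d i j)))
  shape i j h := by
    apply ModuleCat.hom_ext
    apply LinearMap.ext; intro x
    obtain ⟨y, rfl⟩ := Submodule.Quotient.mk_surjective _ x
    dsimp only
    rw [ModuleCat.hom_ofHom, Submodule.mapQ_apply, E.shape i j h]
    rfl
  d_comp_d' i j k _ _ := by
    apply ModuleCat.hom_ext
    apply LinearMap.ext; intro x
    obtain ⟨y, rfl⟩ := Submodule.Quotient.mk_surjective _ x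
    have h0 := congrArg TriModHom.g (E.d_comp_d i j k)
    simp only [comp_g, zero_g] at h0
    show Submodule.Quotient.mk ((E.d j k).g ((E.d i j).g y)) = 0
    rw [← LinearMap.comp_apply, h0]
    rfl

end MoreConstructions
section HomModule
open CategoryTheory Limits
variable {R S M : Type} [CommRing R] [CommRing S]
  [AddCommGroup M] [Module R M] [Module S M] [SMulCommClass R S M]

variable (S M) in
/-- Scalar multiplication by `r : R` on `M`, as an `S`-linear map. -/
def rsmulM (r : R) : M →ₗ[S] M where
  toFun m := r • m
  map_add' := smul_add r
  map_smul' s m := (smul_comm r s m)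

/-- The right `R`-module structure on `Hom_S(M, Y)` coming from the `R`-action on `M`. -/
instance homRModule (Y : Type) [AddCommGroup Y] [Module S Y] : Module R (M →ₗ[S] Y) where
  smul r f := f ∘ₗ rsmulM S M r
  one_smul f := by
    apply LinearMap.ext; intro m
    show f ((1 : R) • m) = f m
    rw [one_smul]
  mul_smul r r' f := by
    apply LinearMap.ext; intro m
    show f ((r * r') • m) = f (r' • r • m)
    rw [mul_comm, mul_smul]
  smul_zero r := by apply LinearMap.ext; intro m; rfl
  smul_add r f g := by apply LinearMap.ext; intro m; rfl
  add_smul r r' f := by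
    apply LinearMap.ext; intro m
    show f ((r + r') • m) = f (r • m) + f (r' • m)
    rw [add_smul, map_add]
  zero_smul f := by
    apply LinearMap.ext; intro m
    show f ((0 : R) • m) = 0
    rw [zero_smul, map_zero]

@[simp] lemma homRModule_smul_apply {Y : Type} [AddCommGroup Y] [Module S Y]
    (r : R) (f : M →ₗ[S] Y) (m : M) : (r • f) m = f (r • m) := rfl

/-- Postcomposition `Hom_S(M, g)`, as an `R`-linear map. -/
def hT {Y Y' : Type} [AddCommGroup Y] [Module S Y] [AddCommGroup Y'] [Module S Y']
    (g : Y →ₗ[S] Y') : (M →ₗ[S] Y) →ₗ[R] (M →ₗ[S] Y') where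
  toFun f := g ∘ₗ f
  map_add' f f' := by apply LinearMap.ext; intro m; simp
  map_smul' r f := rfl

@[simp] lemma hT_zero {Y Y' : Type} [AddCommGroup Y] [Module S Y] [AddCommGroup Y']
    [Module S Y'] : hT (R := R) (M := M) (0 : Y →ₗ[S] Y') = 0 := by
  apply LinearMap.ext; intro f; apply LinearMap.ext; intro m; rfl

lemma hT_comp {Y Y' Y'' : Type} [AddCommGroup Y] [Module S Y] [AddCommGroup Y']
    [Module S Y'] [AddCommGroup Y''] [Module S Y''] (g : Y →ₗ[S] Y') (g' : Y' →ₗ[S] Y'') :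
    hT (R := R) (M := M) (g' ∘ₗ g) = (hT g') ∘ₗ (hT g) := by
  apply LinearMap.ext; intro f; apply LinearMap.ext; intro m; rfl

variable (R M) in
/-- The complex `Hom_S(M, E)` of `R`-modules obtained from a complex `E` of `S`-modules. -/
noncomputable def homComplex (E : ChainComplex (ModuleCat S) ℤ) :
    ChainComplex (ModuleCat R) ℤ where
  X i := ModuleCat.of R (M →ₗ[S] E.X i)
  d i j := ModuleCat.ofHom (hT (E.d i j).hom : _ →ₗ[R] _)
  shape i j h := by
    have h0 : (E.d i j).hom = 0 := by rw [E.shape i j h]; rfl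
    apply ModuleCat.hom_ext
    rw [ModuleCat.hom_ofHom, h0, hT_zero]; rfl
  d_comp_d' i j k _ _ := by
    have h0 : ((E.d j k).hom ∘ₗ (E.d i j).hom) = 0 := by
      rw [← ModuleCat.hom_comp, E.d_comp_d i j k]; rfl
    apply ModuleCat.hom_ext
    rw [ModuleCat.hom_comp, ModuleCat.hom_ofHom, ModuleCat.hom_ofHom, ← hT_comp, h0, hT_zero]
    rfl

variable (R S M) in
/-- Condition (3): `Hom_S(M, -)` takes acyclic complexes of injective `S`-modules to
acyclic complexes of `R`-modules. -/
def Cond3 : Prop :=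
  ∀ (E : ChainComplex (ModuleCat S) ℤ),
    (∀ i, Module.Injective S (E.X i)) → (∀ i, E.ExactAt i) →
    ∀ i, (homComplex R M E).ExactAt i

variable (R S M) in
/-- Condition (4): `Hom_S(M, I) ∈ ᗮGInj(R)` for every injective `S`-module `I`. -/
def Cond4 : Prop :=
  ∀ (I : Type) [AddCommGroup I] [Module S I], Module.Injective S I →
    ∀ (G : Type) [AddCommGroup G] [Module R G],
      ModGorensteinInjective R G → Ext1Vanishes R (M →ₗ[S] I) G

variable (S M) in
/-- The evaluation map `M ⊗_R Hom_S(M, Y) → Y` as an additive map. -/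
noncomputable def evMapAdd (Y : Type) [AddCommGroup Y] [Module S Y] :
    (M ⊗[R] (M →ₗ[S] Y)) →+ Y :=
  TensorProduct.liftAddHom
    (AddMonoidHom.mk' (fun m => AddMonoidHom.mk' (fun f : M →ₗ[S] Y => f m)
      (fun f g => rfl)) (fun m m' => by
        apply AddMonoidHom.ext; intro f; exact f.map_add m m'))
    (fun r m f => by show f (r • m) = (r • f) m; rfl)

lemma evMapAdd_smul {Y : Type} [AddCommGroup Y] [Module S Y] (s : S)
    (t : M ⊗[R] (M →ₗ[S] Y)) : evMapAdd S M Y (s • t) = s • evMapAdd S M Y t := by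
  induction t using TensorProduct.induction_on with
  | zero => simp
  | tmul m f =>
    rw [TensorProduct.smul_tmul']
    show (f : M →ₗ[S] Y) (s • m) = s • f m
    exact f.map_smul s m
  | add a b ha hb => simp only [map_add, smul_add, ha, hb]

variable (S M) in
/-- The evaluation map `M ⊗_R Hom_S(M, Y) → Y`. -/
noncomputable def evMap (Y : Type) [AddCommGroup Y] [Module S Y] :
    (M ⊗[R] (M →ₗ[S] Y)) →ₗ[S] Y where
  toFun := evMapAdd S M Y
  map_add' := map_add _
  map_smul' := evMapAdd_smul

variable (R S M) in
/-- The Γ-module `e²_ρ(Y) = (Hom_S(M,Y), Y)_1`. -/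
noncomputable def e2rhoObj (Y : Type) [AddCommGroup Y] [Module S Y] : TriMod R S M :=
  ⟨M →ₗ[S] Y, Y, evMap S M Y⟩

end HomModule
section Functors
open CategoryTheory Limits
variable (R S M : Type) [CommRing R] [CommRing S]
  [AddCommGroup M] [Module R M] [Module S M] [SMulCommClass R S M]

/-- The evaluation functor `e¹ : Mod Γ → Mod R`, `(X,Y)_φ ↦ X`. -/
noncomputable def ev1 : TriMod R S M ⥤ ModuleCat R where
  obj A := ModuleCat.of R A.X
  map u := ModuleCat.ofHom u.f
  map_id A := rfl
  map_comp u v := rfl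

/-- The functor `e¹_λ : Mod R → Mod Γ`, `X ↦ (X, M ⊗ X)_1`. -/
noncomputable def e1fun : ModuleCat R ⥤ TriMod R S M where
  obj X := e1obj R S M X
  map {X X'} f := ⟨f.hom, lT f.hom, by
    show lT (M := M) (S := S) f.hom ∘ₗ LinearMap.id = LinearMap.id ∘ₗ _
    simp; rfl⟩
  map_id X := by
    apply TriModHom.ext
    · rfl
    · exact lT_id
  map_comp {X X' X''} f g := by
    apply TriModHom.ext <;> dsimp only [comp_f, comp_g]
    · rfl
    · show lT (M := M) (S := S) (g.hom ∘ₗ f.hom) = _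
      rw [lT_comp]; rfl

/-- The evaluation functor `e² : Mod Γ → Mod S`, `(X,Y)_φ ↦ Y`. -/
noncomputable def ev2 : TriMod R S M ⥤ ModuleCat S where
  obj A := ModuleCat.of S A.Y
  map u := ModuleCat.ofHom u.g
  map_id A := rfl
  map_comp u v := rfl

/-- The functor `e²_λ : Mod S → Mod Γ`, `Y ↦ (0, Y)_0`. -/
noncomputable def e2fun : ModuleCat S ⥤ TriMod R S M where
  obj Y := e2obj R S M Y
  map {Y Y'} g := ⟨LinearMap.id, g.hom, by
    show g.hom ∘ₗ (0 : (M ⊗[R] PUnit) →ₗ[S] Y) = _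
    simp [e2obj]; rfl⟩
  map_id Y := by apply TriModHom.ext <;> rfl
  map_comp f g := by
    apply TriModHom.ext
    · show LinearMap.id ∘ₗ LinearMap.id = (LinearMap.id : PUnit →ₗ[R] PUnit)
      simp
    · rfl

/-- The functor `e²_ρ : Mod S → Mod Γ`, `Y ↦ (Hom_S(M,Y), Y)_1`. -/
noncomputable def e2rhoFun : ModuleCat S ⥤ TriMod R S M where
  obj Y := e2rhoObj R S M Y
  map {Y Y'} g := ⟨hT g.hom, g.hom, by
    apply LinearMap.ext; intro t
    induction t using TensorProduct.induction_on with
    | zero => simp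
    | tmul m f => rfl
    | add a b ha hb => simp only [map_add, ha, hb]⟩
  map_id Y := by
    apply TriModHom.ext <;> dsimp only [id_f, id_g]
    · apply LinearMap.ext; intro f; apply LinearMap.ext; intro m; rfl
    · rfl
  map_comp f g := by
    apply TriModHom.ext <;> dsimp only [comp_f, comp_g]
    · apply LinearMap.ext; intro u; apply LinearMap.ext; intro m; rfl
    · rfl

end Functors

section Props
open CategoryTheory Limits
variable {R S M : Type} [CommRing R] [CommRing S]
  [AddCommGroup M] [Module R M] [Module S M] [SMulCommClass R S M]

/-- `Ext¹_Γ(P, A) = 0`: every extension `0 → A → D → P → 0` of Γ-modules splits. -/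
def TriExt1Vanishes (P A : TriMod R S M) : Prop :=
  ∀ (D : TriMod R S M) (i : A ⟶ D) (p : D ⟶ P) (w : i ≫ p = 0), Epi p →
    Nonempty (IsLimit (KernelFork.ofι i w)) → ∃ s : P ⟶ D, s ≫ p = 𝟙 P

/-- `A ∈ GProj(Γ)ᗮ`. -/
def TriMemGProjPerp (A : TriMod R S M) : Prop :=
  ∀ G : TriMod R S M, IsGorensteinProjective G → TriExt1Vanishes G A

/-- `A ∈ ᗮGInj(Γ)`. -/
def TriMemPerpGInj (A : TriMod R S M) : Prop :=
  ∀ G : TriMod R S M, IsGorensteinInjective G → TriExt1Vanishes A G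

variable (R S M) in
/-- `Γ` is virtually Gorenstein: `GProj(Γ)ᗮ = ᗮGInj(Γ)`. -/
def TriVirtuallyGorenstein : Prop :=
  ∀ A : TriMod R S M, TriMemGProjPerp A ↔ TriMemPerpGInj A

/-- A ring `A` is virtually Gorenstein: `GProj(A)ᗮ = ᗮGInj(A)`. -/
def RingVirtuallyGorenstein (A : Type) [Ring A] : Prop :=
  ∀ (N : Type) [AddCommGroup N] [Module A N],
    (∀ (G : Type) [AddCommGroup G] [Module A G],
        ModGorensteinProjective A G → Ext1Vanishes A G N) ↔
    (∀ (G : Type) [AddCommGroup G] [Module A G],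
        ModGorensteinInjective A G → Ext1Vanishes A N G)

/-- An object of a category with zero morphisms is indecomposable: it is nonzero and its
only idempotent endomorphisms are `0` and the identity. -/
def Indec {C : Type u} [Category.{v} C] [Limits.HasZeroMorphisms C] (A : C) : Prop :=
  ¬ IsZero A ∧ ∀ e : A ⟶ A, e ≫ e = e → e = 0 ∨ e = 𝟙 A

/-- A Γ-module is finitely generated iff both components are. -/
def TriFG (A : TriMod R S M) : Prop := Module.Finite R A.X ∧ Module.Finite S A.Y

variable (R S M) in
/-- `Γ` is of finite Cohen-Macaulay type. -/
def TriCMFinite : Prop :=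
  ∃ (n : ℕ) (rep : Fin n → TriMod R S M),
    ∀ A : TriMod R S M, TriFG A → Indec A → IsGorensteinProjective A →
      ∃ i : Fin n, Nonempty (A ≅ rep i)

variable (R S M) in
/-- `Γ` is Cohen-Macaulay free. -/
def TriCMFree : Prop :=
  ∀ A : TriMod R S M, TriFG A → IsGorensteinProjective A → Projective A

/-- A ring is of finite Cohen-Macaulay type: up to isomorphism, only finitely many
indecomposable finitely generated Gorenstein projective modules. -/
def RingCMFinite (A : Type) [Ring A] : Prop :=
  ∃ (n : ℕ) (rep : Fin n → ModuleCat.{0} A),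
    ∀ N : ModuleCat.{0} A, Module.Finite A N → Indec N → IsGorensteinProjective N →
      ∃ i : Fin n, Nonempty (N ≅ rep i)

/-- A ring is Cohen-Macaulay free: every finitely generated Gorenstein projective module
is projective. -/
def RingCMFree (A : Type) [Ring A] : Prop :=
  ∀ (N : Type) [AddCommGroup N] [Module A N],
    Module.Finite A N → ModGorensteinProjective A N → Module.Projective A N

end Props

section TorProof
open CategoryTheory Limits

variable {R S M : Type} [CommRing R] [CommRing S]
  [AddCommGroup M] [Module R M] [Module S M] [SMulCommClass R S M]

private lemma punitExt {Y Z : Type} [AddCommGroup Y] [Module S Y] [AddCommGroup Z] [Module S Z]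
    [Subsingleton Z] (f g : Y →ₗ[S] Z) : f = g :=
  LinearMap.ext fun _ => Subsingleton.elim _ _

variable (R S M) in
/-- The Γ-module `(X', 0, 0)`. -/
@[reducible] noncomputable def r1obj (X' : Type) [AddCommGroup X'] [Module R X'] : TriMod R S M :=
  ⟨X', PUnit, 0⟩

/-- The test morphism `e¹_λ(R) ⟶ B` associated to an element `x : B.X`. -/
noncomputable def tst (B : TriMod R S M) (x : B.X) : e1obj R S M R ⟶ B :=
  ⟨LinearMap.toSpanSingleton R B.X x,
   B.phi ∘ₗ lT (LinearMap.toSpanSingleton R B.X x),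
   by apply LinearMap.ext; intro t; rfl⟩

@[simp] lemma tst_f_apply (B : TriMod R S M) (x : B.X) (r : R) :
    (tst B x).f r = r • x := rfl

lemma tst_comp {B C : TriMod R S M} (x : B.X) (u : B ⟶ C) :
    tst B x ≫ u = tst C (u.f x) := by
  have hf : u.f ∘ₗ (tst B x).f = (tst C (u.f x)).f := by
    apply LinearMap.ext; intro r
    exact map_smul u.f (show R from r) x
  apply TriModHom.ext
  · simpa using hf
  · show u.g ∘ₗ (B.phi ∘ₗ lT (tst B x).f) = C.phi ∘ₗ lT (tst C (u.f x)).f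
    apply LinearMap.ext; intro t
    have h1 := LinearMap.congr_fun u.comm (lT (M := M) (S := S) (tst B x).f t)
    have h2 : lT (M := M) (S := S) (tst C (u.f x)).f t
        = lT (M := M) (S := S) u.f (lT (M := M) (S := S) (tst B x).f t) := by
      rw [← hf, lT_comp]; rfl
    simp only [LinearMap.comp_apply] at h1 ⊢
    rw [h1, ← h2]

lemma tst_zero (B : TriMod R S M) : tst B (0 : B.X) = 0 := by
  have hf : LinearMap.toSpanSingleton R B.X 0 = 0 := by
    apply LinearMap.ext; intro r; simp
  apply TriModHom.ext
  · exact hf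
  · show B.phi ∘ₗ lT (S := S) (M := M) (LinearMap.toSpanSingleton R B.X 0) = 0
    rw [hf, lT_zero, LinearMap.comp_zero]

lemma epi_of_surjective {A B : TriMod R S M} (u : A ⟶ B)
    (hf : Function.Surjective u.f) (hg : Function.Surjective u.g) : Epi u := by
  constructor
  intro Z a b hab
  apply TriModHom.ext
  · apply LinearMap.ext; intro x
    obtain ⟨y, rfl⟩ := hf x
    have := congrArg TriModHom.f hab
    simpa using LinearMap.congr_fun this y
  · apply LinearMap.ext; intro x
    obtain ⟨y, rfl⟩ := hg x
    have := congrArg TriModHom.g hab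
    simpa using LinearMap.congr_fun this y

section KernelLemmas

variable {G B C : TriMod R S M} {i : G ⟶ B} {g : B ⟶ C} {w : i ≫ g = 0}

lemma injective_f_of_isLimit (hl : IsLimit (KernelFork.ofι i w)) :
    Function.Injective i.f := by
  rw [← LinearMap.ker_eq_bot, LinearMap.ker_eq_bot']
  intro x hx
  have h0 : tst G x ≫ i = 0 := by rw [tst_comp, hx, tst_zero]
  have := Fork.IsLimit.hom_ext hl (by
    simpa using h0 : tst G x ≫ (KernelFork.ofι i w).ι = 0 ≫ (KernelFork.ofι i w).ι)
  have hx1 := congrArg TriModHom.f this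
  calc x = (tst G x).f (1 : R) := (one_smul R x).symm
    _ = 0 := by rw [hx1]; rfl

lemma mem_range_f_of_isLimit (hl : IsLimit (KernelFork.ofι i w)) (x : B.X)
    (hx : g.f x = 0) : x ∈ LinearMap.range i.f := by
  have h0 : tst B x ≫ g = 0 := by rw [tst_comp, hx, tst_zero]
  obtain ⟨l, hl'⟩ := KernelFork.IsLimit.lift' hl (tst B x) h0
  refine ⟨l.f (1 : R), ?_⟩
  have := congrArg TriModHom.f hl'
  simp only [Fork.ι_ofι, comp_f] at this
  calc i.f (l.f (1 : R)) = (i.f ∘ₗ l.f) (1 : R) := rfl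
    _ = (tst B x).f (1 : R) := by rw [this]
    _ = x := one_smul R x

end KernelLemmas

lemma mem_range_of_exact (T : ShortComplex (TriMod R S M)) (hT : T.Exact)
    (x : T.X₂.X) (hx : T.g.f x = 0) : x ∈ LinearMap.range T.f.f := by
  obtain ⟨hd, hz⟩ := hT.condition
  set L := hd.left with hL
  have h0 : tst T.X₂ x ≫ T.g = 0 := by rw [tst_comp, hx, tst_zero]
  obtain ⟨l, hl'⟩ := KernelFork.IsLimit.lift' L.hi (tst T.X₂ x) h0
  have hsurj : ∀ k : L.K.X, k ∈ LinearMap.range L.f'.f := by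
    intro k
    set N := LinearMap.range L.f'.f with hN
    let s : L.K ⟶ r1obj R S M (L.K.X ⧸ N) := ⟨N.mkQ, 0, punitExt _ _⟩
    have hs : L.f' ≫ s = 0 := by
      apply TriModHom.ext
      · apply LinearMap.ext; intro a
        simp only [comp_f, zero_f, LinearMap.comp_apply, LinearMap.zero_apply]
        show N.mkQ (L.f'.f a) = 0
        rw [Submodule.mkQ_apply, Submodule.Quotient.mk_eq_zero]
        exact ⟨a, rfl⟩
      · exact punitExt _ _
    obtain ⟨m, hm⟩ := CokernelCofork.IsColimit.desc' L.hπ s hs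
    have hm0 : m = 0 := hz.eq_of_src m 0
    have hsz : s = 0 := by
      rw [← hm, hm0, comp_zero]
    have hmkQ : N.mkQ = 0 := by
      have := congrArg TriModHom.f hsz
      simpa using this
    have hk5 : N.mkQ k = 0 := by rw [hmkQ]; rfl
    rw [Submodule.mkQ_apply, Submodule.Quotient.mk_eq_zero] at hk5
    exact hk5
  obtain ⟨a, ha⟩ := hsurj (l.f (1 : R))
  refine ⟨a, ?_⟩
  have h1 := congrArg TriModHom.f hl'
  simp only [Fork.ι_ofι, comp_f] at h1
  have h2 := congrArg TriModHom.f L.f'_i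
  simp only [comp_f] at h2
  calc T.f.f a = (L.i.f ∘ₗ L.f'.f) a := by rw [h2]
    _ = L.i.f (l.f (1 : R)) := by rw [LinearMap.comp_apply, ha]
    _ = (L.i.f ∘ₗ l.f) (1 : R) := rfl
    _ = (tst T.X₂ x).f (1 : R) := by rw [h1]
    _ = x := one_smul R x

section KerObj

variable {A B : TriMod R S M} (u : A ⟶ B)

/-- The componentwise kernel of a morphism of Γ-modules. -/
noncomputable def kerObj : TriMod R S M where
  X := ↥(LinearMap.ker u.f)
  Y := ↥(LinearMap.ker u.g)
  phi := LinearMap.codRestrict (LinearMap.ker u.g)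
    (A.phi ∘ₗ lT (LinearMap.ker u.f).subtype) (fun t => by
      have h1 : u.f ∘ₗ (LinearMap.ker u.f).subtype = 0 := by
        apply LinearMap.ext; intro z; exact z.2
      have h2 := LinearMap.congr_fun u.comm (lT (M := M) (S := S) (LinearMap.ker u.f).subtype t)
      simp only [LinearMap.comp_apply] at h2
      have h3 : lT (M := M) (S := S) u.f (lT (M := M) (S := S) (LinearMap.ker u.f).subtype t)
          = lT (M := M) (S := S) (u.f ∘ₗ (LinearMap.ker u.f).subtype) t := by
        rw [lT_comp]; rfl
      simp only [LinearMap.mem_ker, LinearMap.comp_apply]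
      rw [h2, h3, h1, lT_zero]
      simp)

/-- The inclusion of the kernel. -/
noncomputable def kerι : kerObj u ⟶ A :=
  ⟨(LinearMap.ker u.f).subtype, (LinearMap.ker u.g).subtype, by
    apply LinearMap.ext; intro t; rfl⟩

lemma kerι_comp : kerι u ≫ u = 0 := by
  apply TriModHom.ext
  · apply LinearMap.ext; intro z
    exact z.2
  · apply LinearMap.ext; intro z
    exact z.2

/-- The lift to the componentwise kernel. -/
noncomputable def kerLift {W : TriMod R S M} (t : W ⟶ A) (ht : t ≫ u = 0) :
    W ⟶ kerObj u := by
  have hf0 : ∀ x, t.f x ∈ LinearMap.ker u.f := fun x => by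
    have := congrArg TriModHom.f ht
    simp only [comp_f, zero_f] at this
    exact LinearMap.congr_fun this x
  have hg0 : ∀ y, t.g y ∈ LinearMap.ker u.g := fun y => by
    have := congrArg TriModHom.g ht
    simp only [comp_g, zero_g] at this
    exact LinearMap.congr_fun this y
  refine ⟨LinearMap.codRestrict _ t.f hf0, LinearMap.codRestrict _ t.g hg0, ?_⟩
  apply LinearMap.ext; intro z
  apply Subtype.ext
  show t.g (W.phi z) = A.phi (lT (M := M) (S := S) (LinearMap.ker u.f).subtype
      (lT (M := M) (S := S) (LinearMap.codRestrict _ t.f hf0) z))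
  have h3 : lT (M := M) (S := S) (LinearMap.ker u.f).subtype
      (lT (M := M) (S := S) (LinearMap.codRestrict _ t.f hf0) z)
      = lT (M := M) (S := S)
          ((LinearMap.ker u.f).subtype ∘ₗ LinearMap.codRestrict _ t.f hf0) z := by
    rw [lT_comp]; rfl
  have h4 : (LinearMap.ker u.f).subtype ∘ₗ
      LinearMap.codRestrict (LinearMap.ker u.f) t.f hf0 = t.f := by
    apply LinearMap.ext; intro x; rfl
  rw [h3, h4]
  exact LinearMap.congr_fun t.comm z

/-- The componentwise kernel is a categorical kernel. -/
noncomputable def kerIsLimit : IsLimit (KernelFork.ofι (kerι u) (kerι_comp u)) := by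
  refine KernelFork.IsLimit.ofι _ _ (fun {W} t ht => kerLift u t ht)
    (fun {W} t ht => ?_) (fun {W} t ht m hm => ?_)
  · apply TriModHom.ext
    · apply LinearMap.ext; intro x; rfl
    · apply LinearMap.ext; intro y; rfl
  · have hmf := congrArg TriModHom.f hm
    have hmg := congrArg TriModHom.g hm
    simp only [comp_f, comp_g] at hmf hmg
    apply TriModHom.ext
    · apply LinearMap.ext; intro x
      apply Subtype.ext
      exact LinearMap.congr_fun hmf x
    · apply LinearMap.ext; intro y
      apply Subtype.ext
      exact LinearMap.congr_fun hmg y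

end KerObj

/-- Equality of indices gives an isomorphism of the corresponding terms of a complex. -/
noncomputable def xIso (F : ChainComplex (TriMod R S M) ℤ) {a b : ℤ} (h : a = b) :
    F.X a ≅ F.X b := eqToIso (congrArg F.X h)

lemma d_comp_xIso (F : ChainComplex (TriMod R S M) ℤ) {c a b : ℤ} (h : a = b) :
    F.d c a ≫ (xIso F h).hom = F.d c b := by
  subst h; simp [xIso]

/-- The first syzygy of a totally acyclic complex is Gorenstein projective. -/
lemma gp_of_syzygy (F : ChainComplex (TriMod R S M) ℤ) (hF : IsTotallyAcyclic F) :
    IsGorensteinProjective (kerObj (F.d 1 0)) := by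
  obtain ⟨hproj, hexact, hlift⟩ := hF
  refine ⟨{ X := fun i => F.X (i + 1), d := fun i j => F.d (i + 1) (j + 1),
            shape := fun i j h => F.shape _ _ (fun h' => h (by
              simp only [ComplexShape.down_Rel] at h' ⊢; omega)),
            d_comp_d' := fun i j k _ _ => F.d_comp_d _ _ _ },
          ⟨fun i => hproj (i + 1), fun i => ?_, ?_⟩, kerι (F.d 1 0), kerι_comp (F.d 1 0),
          ⟨kerIsLimit (F.d 1 0)⟩⟩
  · -- exactness
    rw [HomologicalComplex.exactAt_iff' _ (i + 1) i (i - 1)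
      (ChainComplex.prev ℤ i) (ChainComplex.next ℤ i)]
    have h2 := (HomologicalComplex.exactAt_iff' F (i + 1 + 1) (i + 1) (i - 1 + 1)
      (ChainComplex.prev ℤ (i + 1)) (by rw [ChainComplex.next]; omega)).mp (hexact (i + 1))
    exact h2
  · -- lifting property
    intro Pobj hPobj i g hg
    obtain ⟨h, hh⟩ := hlift Pobj hPobj (i + 1) g hg
    refine ⟨(xIso F (show i - 1 + 1 = i + 1 - 1 by omega)).hom ≫ h, ?_⟩
    show F.d (i + 1) (i - 1 + 1) ≫ ((xIso F _).hom ≫ h) = g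
    rw [← Category.assoc, d_comp_xIso]
    exact hh

/-- A subsingleton module is Gorenstein projective. -/
lemma gp_of_subsingleton (A : Type) [Ring A] (N : Type) [AddCommGroup N] [Module A N]
    [Subsingleton N] : ModGorensteinProjective A N := by
  haveI : Subsingleton (ModuleCat.of A N) := inferInstanceAs (Subsingleton N)
  have hz : IsZero (ModuleCat.of A N) := ModuleCat.isZero_of_subsingleton _
  have hproj : Projective (ModuleCat.of A N) := ⟨fun f e _ => ⟨0, hz.eq_of_src _ _⟩⟩
  refine ⟨{ X := fun _ => ModuleCat.of A N, d := fun _ _ => 0,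
            shape := fun _ _ _ => rfl, d_comp_d' := fun _ _ _ _ _ => by simp },
          ⟨fun _ => hproj, fun i => ShortComplex.exact_of_isZero_X₂ _ hz,
           fun Pq hq i g hg => ⟨0, by rw [hz.eq_of_src g 0]; simp⟩⟩,
          𝟙 _, by simp, ⟨?_⟩⟩
  exact KernelFork.IsLimit.ofι _ _ (fun {W'} g' _ => g')
    (fun {W'} g' eq' => Category.comp_id g')
    (fun {W'} g' eq' m hm => by simpa using hm)

/-- The first component of a projective Γ-module is a projective `R`-module. -/
lemma projective_X_of_projective (A : TriMod R S M) (hA : Projective A) :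
    Module.Projective R A.X := by
  classical
  set p : (A.X →₀ R) →ₗ[R] A.X := Finsupp.linearCombination R id with hp
  have hps : Function.Surjective p := fun x => ⟨Finsupp.single x 1, by simp [hp]⟩
  let eB : r1obj R S M (A.X →₀ R) ⟶ r1obj R S M A.X := ⟨p, 0, punitExt _ _⟩
  haveI : Epi eB := epi_of_surjective eB hps (fun z => ⟨0, Subsingleton.elim _ _⟩)
  let uu : A ⟶ r1obj R S M A.X := ⟨LinearMap.id, 0, punitExt _ _⟩
  obtain ⟨l, hl⟩ := hA.factors uu eB
  have hlf : p ∘ₗ l.f = LinearMap.id := by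
    have := congrArg TriModHom.f hl
    simpa using this
  exact Module.Projective.of_split l.f p hlf

end TorProof

section Statement
open CategoryTheory Limits
variable {R S M : Type} [CommRing R] [CommRing S]
  [AddCommGroup M] [Module R M] [Module S M] [SMulCommClass R S M]

/-- If Gorenstein projective Γ-modules are exactly the `(X,Y)_φ` with `X` Gorenstein
projective over `R`, `Coker φ` Gorenstein projective over `S` and `φ` mono, then
`Tor₁^R(M, P) = 0` for every Gorenstein projective `R`-module `P`. -/
theorem tor_vanishes_of_gorensteinProjective_classification
    (H : ∀ A : TriMod R S M,
      IsGorensteinProjective A ↔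
        ModGorensteinProjective R A.X ∧
          ModGorensteinProjective S (A.Y ⧸ LinearMap.range A.phi) ∧
          Function.Injective A.phi)
    (P : ModuleCat.{0} R) (hP : IsGorensteinProjective P) :
    Limits.IsZero (((Tor (ModuleCat.{0} R) 1).obj (ModuleCat.of R M)).obj P) := by
  classical
  -- Step 1: `e¹_λ(P)` is Gorenstein projective over `Γ`.
  haveI hsub : Subsingleton ((M ⊗[R] (↑P : Type)) ⧸
      LinearMap.range (e1obj R S M (↑P : Type)).phi) := by
    exact (Submodule.Quotient.subsingleton_iff ..).mpr LinearMap.range_id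
  have hGP : IsGorensteinProjective (e1obj R S M (↑P : Type)) := by
    refine (H _).mpr ⟨?_, ?_, fun a b h => h⟩
    · exact hP
    · exact gp_of_subsingleton S _
  obtain ⟨F, hFta, ι, w, ⟨hlim⟩⟩ := hGP
  -- Step 2: the first syzygy of `F` is Gorenstein projective, hence its structure
  -- map is injective.
  have hG1gp : IsGorensteinProjective (kerObj (F.d 1 0)) := gp_of_syzygy F hFta
  obtain ⟨hproj, hexact, hlift⟩ := hFta
  have hphi1 : Function.Injective (kerObj (F.d 1 0)).phi := ((H _).mp hG1gp).2.2
  set Z := LinearMap.ker (F.d 1 0).f with hZdef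
  have hinj : Function.Injective (LinearMap.lTensor M Z.subtype) := by
    intro a b hab
    apply hphi1
    apply Subtype.ext
    show (F.X 1).phi (lT (M := M) (S := S) Z.subtype a)
      = (F.X 1).phi (lT (M := M) (S := S) Z.subtype b)
    have hab' : lT (M := M) (S := S) Z.subtype a = lT (M := M) (S := S) Z.subtype b := hab
    rw [hab']
  -- Step 3: componentwise exactness of `F` on first components.
  have hdd : ∀ (a b c : ℤ) (x : (F.X a).X), (F.d b c).f ((F.d a b).f x) = 0 := by
    intro a b c x
    have h := congrArg TriModHom.f (F.d_comp_d a b c)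
    simp only [comp_f, zero_f] at h
    exact LinearMap.congr_fun h x
  have injf : Function.Injective ι.f := injective_f_of_isLimit hlim
  have hrangeι : ∀ x, (F.d 0 (-1)).f x = 0 → x ∈ LinearMap.range ι.f :=
    fun x hx => mem_range_f_of_isLimit hlim x hx
  have exactF : ∀ (k : ℤ) (x : (F.X (k + 1)).X), (F.d (k + 1) k).f x = 0 →
      x ∈ LinearMap.range (F.d (k + 1 + 1) (k + 1)).f := by
    intro k x hx
    have h2 := (HomologicalComplex.exactAt_iff' F (k + 1 + 1) (k + 1) k
      (ChainComplex.prev ℤ (k + 1)) (by rw [ChainComplex.next]; omega)).mp (hexact (k + 1))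
    exact mem_range_of_exact _ h2 x hx
  -- Step 4: the augmentation `π : F₁.X → P`.
  have hmem : ∀ x : (F.X 1).X, (F.d 1 0).f x ∈ LinearMap.range ι.f :=
    fun x => hrangeι _ (hdd 1 0 (-1) x)
  set eι := LinearEquiv.ofInjective ι.f injf with heι
  set π : (F.X 1).X →ₗ[R] (↑P : Type) :=
    eι.symm.toLinearMap ∘ₗ LinearMap.codRestrict (LinearMap.range ι.f) (F.d 1 0).f hmem
    with hπdef
  have hπ : ∀ x, ι.f (π x) = (F.d 1 0).f x := by
    intro x
    have h1 : ∀ y : LinearMap.range ι.f, ι.f (eι.symm y) = ↑y := by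
      intro y
      have h2 := congrArg Subtype.val (eι.apply_symm_apply y)
      rw [heι, LinearEquiv.ofInjective_apply] at h2
      exact h2
    exact h1 _
  have hπker : ∀ x, π x = 0 ↔ (F.d 1 0).f x = 0 := by
    intro x
    constructor
    · intro h; rw [← hπ x, h]; exact map_zero ι.f
    · intro h
      have h3 : ι.f (π x) = ι.f 0 := by rw [hπ x, h]; exact (map_zero ι.f).symm
      exact injf h3
  have hπsurj : Function.Surjective π := by
    intro q
    have h0 : (F.d 0 (-1)).f (ι.f q) = 0 := by
      have h := congrArg TriModHom.f w
      simp only [comp_f, zero_f] at h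
      exact LinearMap.congr_fun h q
    obtain ⟨x, hx⟩ := exactF (-1) (ι.f q) h0
    exact ⟨x, injf (by rw [hπ x]; exact hx)⟩
  -- Step 5: the projective resolution of `P`.
  let C : ChainComplex (ModuleCat.{0} R) ℕ := ChainComplex.of
    (fun n => ModuleCat.of R (F.X ((n : ℤ) + 1)).X)
    (fun n => ModuleCat.ofHom ((F.d ((n : ℤ) + 1 + 1) ((n : ℤ) + 1)).f :
      (F.X ((n : ℤ) + 1 + 1)).X →ₗ[R] (F.X ((n : ℤ) + 1)).X))
    (fun n => by
      apply ModuleCat.hom_ext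
      apply LinearMap.ext
      intro x
      exact hdd _ _ _ x)
  have hCd : ∀ n : ℕ, C.d (n + 1) n = ModuleCat.ofHom ((F.d ((n : ℤ) + 1 + 1) ((n : ℤ) + 1)).f :
      (F.X ((n : ℤ) + 1 + 1)).X →ₗ[R] (F.X ((n : ℤ) + 1)).X) :=
    fun n => by simp only [C]; exact ChainComplex.of_d _ _ n
  have w0 : C.d 1 0 ≫ (ModuleCat.ofHom π : C.X 0 ⟶ P) = 0 := by
    rw [hCd 0]
    apply ModuleCat.hom_ext
    apply LinearMap.ext
    intro x
    show π ((F.d ((0 : ℤ) + 1 + 1) ((0 : ℤ) + 1)).f x) = 0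
    rw [hπker]
    exact hdd _ _ _ x
  set πres : C ⟶ (ChainComplex.single₀ (ModuleCat.{0} R)).obj P :=
    (ChainComplex.toSingle₀Equiv C P).symm ⟨(ModuleCat.ofHom π : C.X 0 ⟶ P), w0⟩ with hπres
  have hπf0 : πres.f 0 = (ModuleCat.ofHom π : C.X 0 ⟶ P) :=
    ChainComplex.toSingle₀Equiv_symm_apply_f_zero _ _
  have hqis : QuasiIso πres := by
    constructor
    intro n
    rcases n with _ | n
    · rw [ChainComplex.quasiIsoAt₀_iff, ShortComplex.quasiIso_iff_of_zeros']
      · have hS1 : (ShortComplex.mk (C.d 1 0) (ModuleCat.ofHom π : C.X 0 ⟶ P) w0).Exact ∧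
            Epi (ShortComplex.mk (C.d 1 0) (ModuleCat.ofHom π : C.X 0 ⟶ P) w0).g := by
          constructor
          · rw [ShortComplex.moduleCat_exact_iff]
            intro x hx
            have hx2 : (F.d 1 0).f x = 0 := (hπker x).mp hx
            obtain ⟨y, hy⟩ := exactF 0 x hx2
            have hy' : (C.d 1 0).hom y = x := by rw [hCd 0]; exact hy
            exact ⟨y, hy'⟩
          · rw [ModuleCat.epi_iff_surjective]
            exact hπsurj
        refine (ShortComplex.exact_and_epi_g_iff_of_iso ?_).1 hS1
        exact ShortComplex.isoMk (Iso.refl _) (Iso.refl _) (Iso.refl _)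
            (by exact (Category.id_comp _).trans (Category.comp_id _).symm)
            (by exact (Category.id_comp _).trans (Category.comp_id _).symm)
      · rfl
      · rfl
      · rfl
    · rw [quasiIsoAt_iff_exactAt' _ _ (ChainComplex.exactAt_succ_single_obj _ _)]
      rw [HomologicalComplex.exactAt_iff' C (n + 1 + 1) (n + 1) n
        (ChainComplex.prev ℕ (n + 1)) (ChainComplex.next_nat_succ n)]
      rw [ShortComplex.moduleCat_exact_iff]
      intro x hx
      have hx' : (C.d (n + 1) n).hom x = 0 := hx
      rw [hCd n] at hx'
      obtain ⟨y, hy⟩ := exactF ((n : ℤ) + 1) (show (F.X ((n : ℤ) + 1 + 1)).X from x) hx'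
      have hy' : (C.d (n + 1 + 1) (n + 1)).hom y = x := by rw [hCd (n + 1)]; exact hy
      exact ⟨y, hy'⟩
  let Pres : ProjectiveResolution P :=
    { complex := C
      projective := fun n => (IsProjective.iff_projective _).mp
        (projective_X_of_projective _ (hproj _))
      π := πres
      quasiIso := hqis }
  -- Step 6: compute `Tor₁` via the resolution.
  let Fm := (CategoryTheory.MonoidalCategory.tensoringLeft (ModuleCat.{0} R)).obj (ModuleCat.of R M)
  have hex : ((Fm.mapHomologicalComplex _).obj C).ExactAt 1 := by
    rw [HomologicalComplex.exactAt_iff' _ 2 1 0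
      (by rw [ChainComplex.prev]; omega) (ChainComplex.next_nat_succ 0)]
    rw [ShortComplex.moduleCat_exact_iff]
    intro x hx
    have hx2 : LinearMap.lTensor M ((F.d 2 1).f : (F.X 2).X →ₗ[R] (F.X 1).X) x = 0 := by
      have h5 : (Fm.map (C.d 1 0)).hom
          = LinearMap.lTensor M ((F.d 2 1).f : (F.X 2).X →ₗ[R] (F.X 1).X) := by
        rw [hCd 0]; rfl
      rw [← h5]
      exact hx
    have hrange21 : ∀ v : (F.X 2).X, (F.d 2 1).f v ∈ Z := fun v => hdd 2 1 0 v
    set c : (F.X 2).X →ₗ[R] ↥Z := LinearMap.codRestrict Z (F.d 2 1).f hrange21 with hcdef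
    have hfac : (LinearMap.lTensor M ((F.d 2 1).f : (F.X 2).X →ₗ[R] (F.X 1).X))
        = (LinearMap.lTensor M Z.subtype) ∘ₗ (LinearMap.lTensor M c) := by
      rw [← LinearMap.lTensor_comp]
      congr 1
    have hc0 : LinearMap.lTensor M c x = 0 := by
      apply hinj
      rw [map_zero]
      exact (LinearMap.congr_fun hfac.symm x).trans hx2
    have hsurjc : Function.Surjective c := by
      intro z
      obtain ⟨v, hv⟩ := exactF 0 (Z.subtype z) z.2
      exact ⟨v, Subtype.ext hv⟩
    have hexc : Function.Exact ((F.d 3 2).f : (F.X 3).X →ₗ[R] (F.X 2).X) c := by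
      intro z
      constructor
      · intro hz
        have hz2 : (F.d 2 1).f z = 0 := congrArg Subtype.val hz
        obtain ⟨y, hy⟩ := exactF 1 z hz2
        exact ⟨y, hy⟩
      · rintro ⟨y, rfl⟩
        apply Subtype.ext
        show (F.d 2 1).f ((F.d 3 2).f y) = 0
        exact hdd 3 2 1 y
    have htens := lTensor_exact M hexc hsurjc
    obtain ⟨y, hy⟩ := (htens x).mp hc0
    refine ⟨y, ?_⟩
    have h6 : (Fm.map (C.d 2 1)).hom
        = LinearMap.lTensor M ((F.d 3 2).f : (F.X 3).X →ₗ[R] (F.X 2).X) := by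
      rw [hCd 1]; rfl
    have h7 := LinearMap.congr_fun h6 y
    exact h7.trans hy
  have hiszero : IsZero (((Fm.mapHomologicalComplex _).obj C).homology 1) :=
    (HomologicalComplex.exactAt_iff_isZero_homology _ _).mp hex
  have e := Pres.isoLeftDerivedObj Fm 1
  exact IsZero.of_iso hiszero e

end Statement
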